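/- Let r : ℤ → ℝ³ be a nondegenerate discrete centroaffine space curve, let β : ℤ → ℝ satisfy β_n ≠ 0 for all n, and define the transversal motion r'(n) = β_n · r(n) (which is again a nondegenerate curve). (i) If β is a constant function, then r' has the same invariants κ_n, κ̄_n, τ_n as r at every n ∈ ℤ. (ii) Conversely, if κ_n + κ̄_n ≠ 0 for all n and r' has the same invariants κ_n, κ̄_n, τ_n as r at every n ∈ ℤ, then β is a constant function. -/

import Mathlib

/-- Determinant of the 3×3 matrix with columns `u`, `v`, `w`. -/
noncomputable def det3 (u v w : Fin 3 → ℝ) : ℝ := (Matrix.of ![u, v, w]).det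

/-- Edge tangent vector of a discrete space curve. -/
def tang3 (r : ℤ → Fin 3 → ℝ) (k : ℤ) : Fin 3 → ℝ := r (k + 1) - r k

/-- Nondegeneracy of a discrete centroaffine space curve. -/
def Nondeg3 (r : ℤ → Fin 3 → ℝ) : Prop :=
  ∀ k : ℤ, det3 (r (k - 1)) (r k) (r (k + 1)) ≠ 0

/-- First centroaffine curvature. -/
noncomputable def kappa3 (r : ℤ → Fin 3 → ℝ) (k : ℤ) : ℝ :=
  det3 (r k) (r (k + 1)) (r (k + 2)) / det3 (r (k - 1)) (r k) (r (k + 1))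

/-- Second centroaffine curvature. -/
noncomputable def kbar3 (r : ℤ → Fin 3 → ℝ) (k : ℤ) : ℝ :=
  det3 (r (k + 1)) (tang3 r (k - 1)) (tang3 r (k + 1)) /
    det3 (r k) (tang3 r (k - 1)) (tang3 r k)

/-- Centroaffine torsion. -/
noncomputable def tau3 (r : ℤ → Fin 3 → ℝ) (k : ℤ) : ℝ :=
  det3 (tang3 r (k - 1)) (tang3 r k) (tang3 r (k + 1)) /
    det3 (r (k - 1)) (r k) (r (k + 1))


lemma det3_coord (u v w : Fin 3 → ℝ) :
    det3 u v w = u 0*v 1*w 2 - u 0*v 2*w 1 - u 1*v 0*w 2 + u 1*v 2*w 0 + u 2*v 0*w 1 - u 2*v 1*w 0 := by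
  simp [det3, Matrix.det_fin_three]

lemma det3_smul3 (a b c : ℝ) (u v w : Fin 3 → ℝ) :
    det3 (a • u) (b • v) (c • w) = a * b * c * det3 u v w := by
  simp only [det3_coord, Pi.smul_apply, smul_eq_mul]; ring

lemma kappa_scaled (r : ℤ → Fin 3 → ℝ) (β : ℤ → ℝ) (k : ℤ) :
    kappa3 (fun n => β n • r n) k =
      (β k * β (k+1) * β (k+2) * det3 (r k) (r (k+1)) (r (k+2))) /
      (β (k-1) * β k * β (k+1) * det3 (r (k-1)) (r k) (r (k+1))) := by
  simp only [kappa3, det3_smul3]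

lemma kbar_scaled (r : ℤ → Fin 3 → ℝ) (β : ℤ → ℝ) (k : ℤ) :
    kbar3 (fun n => β n • r n) k =
      (β (k+1) * β (k+2) * (β k * det3 (r (k+1)) (r k) (r (k+2))
          - β (k-1) * det3 (r (k+1)) (r (k-1)) (r (k+2)))) /
      (β (k-1) * β k * β (k+1) * det3 (r (k-1)) (r k) (r (k+1))) := by
  have e1 : k - 1 + 1 = k := by ring
  have e2 : k + 1 + 1 = k + 2 := by ring
  simp only [kbar3, tang3, e1, e2, det3_coord, Pi.smul_apply, Pi.sub_apply, smul_eq_mul]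
  ring

lemma kbar_plain (r : ℤ → Fin 3 → ℝ) (k : ℤ) :
    kbar3 r k =
      (det3 (r (k+1)) (r k) (r (k+2)) - det3 (r (k+1)) (r (k-1)) (r (k+2))) /
      det3 (r (k-1)) (r k) (r (k+1)) := by
  have e1 : k - 1 + 1 = k := by ring
  have e2 : k + 1 + 1 = k + 2 := by ring
  simp only [kbar3, tang3, e1, e2, det3_coord, Pi.sub_apply]
  ring

lemma tau_scaled (r : ℤ → Fin 3 → ℝ) (β : ℤ → ℝ) (k : ℤ) :
    tau3 (fun n => β n • r n) k =
      (β k * β (k+1) * β (k+2) * det3 (r k) (r (k+1)) (r (k+2))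
        - β (k-1) * β (k+1) * β (k+2) * det3 (r (k-1)) (r (k+1)) (r (k+2))
        + β (k-1) * β k * β (k+2) * det3 (r (k-1)) (r k) (r (k+2))
        - β (k-1) * β k * β (k+1) * det3 (r (k-1)) (r k) (r (k+1))) /
      (β (k-1) * β k * β (k+1) * det3 (r (k-1)) (r k) (r (k+1))) := by
  have e1 : k - 1 + 1 = k := by ring
  have e2 : k + 1 + 1 = k + 2 := by ring
  simp only [tau3, tang3, e1, e2, det3_coord, Pi.smul_apply, Pi.sub_apply, smul_eq_mul]
  ring

lemma tau_plain (r : ℤ → Fin 3 → ℝ) (k : ℤ) :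
    tau3 r k =
      (det3 (r k) (r (k+1)) (r (k+2)) - det3 (r (k-1)) (r (k+1)) (r (k+2))
        + det3 (r (k-1)) (r k) (r (k+2)) - det3 (r (k-1)) (r k) (r (k+1))) /
      det3 (r (k-1)) (r k) (r (k+1)) := by
  have e1 : k - 1 + 1 = k := by ring
  have e2 : k + 1 + 1 = k + 2 := by ring
  simp only [tau3, tang3, e1, e2, det3_coord, Pi.sub_apply]
  ring

/-- Transversal motion `r' n = βₙ • r n` of a discrete centroaffine space curve:
it is again nondegenerate; if `β` is constant the invariants are preserved, and
(assuming `κₙ + κ̄ₙ ≠ 0`) conversely. -/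
theorem stmt_13 (r : ℤ → Fin 3 → ℝ) (hr : Nondeg3 r) (β : ℤ → ℝ)
    (hβ : ∀ n : ℤ, β n ≠ 0) :
    Nondeg3 (fun n => β n • r n) ∧
    ((∀ n m : ℤ, β n = β m) →
      ∀ n : ℤ, kappa3 (fun n => β n • r n) n = kappa3 r n ∧
        kbar3 (fun n => β n • r n) n = kbar3 r n ∧
        tau3 (fun n => β n • r n) n = tau3 r n) ∧
    ((∀ n : ℤ, kappa3 r n + kbar3 r n ≠ 0) →
      (∀ n : ℤ, kappa3 (fun n => β n • r n) n = kappa3 r n ∧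
        kbar3 (fun n => β n • r n) n = kbar3 r n ∧
        tau3 (fun n => β n • r n) n = tau3 r n) →
      ∀ n m : ℤ, β n = β m) := by
  have hN : ∀ k : ℤ, det3 (r k) (r (k+1)) (r (k+2)) ≠ 0 := by
    intro k
    have := hr (k+1)
    have e1 : k + 1 - 1 = k := by ring
    have e2 : k + 1 + 1 = k + 2 := by ring
    rwa [e1, e2] at this
  refine ⟨?_, ?_, ?_⟩
  · -- nondegeneracy of the scaled curve
    intro k
    show det3 (β (k-1) • r (k-1)) (β k • r k) (β (k+1) • r (k+1)) ≠ 0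
    rw [det3_smul3]
    exact mul_ne_zero (mul_ne_zero (mul_ne_zero (hβ _) (hβ _)) (hβ _)) (hr k)
  · -- constant β preserves the invariants
    intro hc n
    have hcb : ∀ j : ℤ, β j = β 0 := fun j => hc j 0
    have h0 : β 0 ≠ 0 := hβ 0
    have hD : det3 (r (n-1)) (r n) (r (n+1)) ≠ 0 := hr n
    have hden : β 0 * β 0 * β 0 * det3 (r (n-1)) (r n) (r (n+1)) ≠ 0 :=
      mul_ne_zero (mul_ne_zero (mul_ne_zero h0 h0) h0) hD
    refine ⟨?_, ?_, ?_⟩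
    · rw [kappa_scaled, kappa3, hcb (n-1), hcb n, hcb (n+1), hcb (n+2),
        div_eq_div_iff hden hD]
      ring
    · rw [kbar_scaled, kbar_plain, hcb (n-1), hcb n, hcb (n+1), hcb (n+2),
        div_eq_div_iff hden hD]
      ring
    · rw [tau_scaled, tau_plain, hcb (n-1), hcb n, hcb (n+1), hcb (n+2),
        div_eq_div_iff hden hD]
      ring
  · -- converse: equal invariants force β constant
    intro hK hinv
    have hstep : ∀ k : ℤ, β k = β (k - 1) := by
      intro k
      have hD : det3 (r (k-1)) (r k) (r (k+1)) ≠ 0 := hr k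
      have hNk : det3 (r k) (r (k+1)) (r (k+2)) ≠ 0 := hN k
      have hden : β (k-1) * β k * β (k+1) * det3 (r (k-1)) (r k) (r (k+1)) ≠ 0 :=
        mul_ne_zero (mul_ne_zero (mul_ne_zero (hβ _) (hβ _)) (hβ _)) hD
      -- step 1 : from κ' = κ we get β (k+2) = β (k-1)
      have h1 := (hinv k).1
      rw [kappa_scaled, kappa3, div_eq_div_iff hden hD] at h1
      have h3 : β (k + 2) = β (k - 1) := by
        have key : β (k+2) * (β k * β (k+1) * (det3 (r k) (r (k+1)) (r (k+2))
            * det3 (r (k-1)) (r k) (r (k+1))))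
            = β (k-1) * (β k * β (k+1) * (det3 (r k) (r (k+1)) (r (k+2))
            * det3 (r (k-1)) (r k) (r (k+1)))) := by linear_combination h1
        exact mul_right_cancel₀
          (mul_ne_zero (mul_ne_zero (hβ _) (hβ _)) (mul_ne_zero hNk hD)) key
      -- step 2 : κ + κ̄ ≠ 0 means det3 (r (k+1)) (r (k-1)) (r (k+2)) ≠ 0
      have hB : det3 (r (k+1)) (r (k-1)) (r (k+2)) ≠ 0 := by
        intro h0
        apply hK k
        rw [kappa3, kbar_plain, h0, sub_zero, ← add_div]
        have hz : det3 (r k) (r (k+1)) (r (k+2)) + det3 (r (k+1)) (r k) (r (k+2)) = 0 := by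
          simp only [det3_coord]; ring
        rw [hz, zero_div]
      -- step 3 : from κ̄' = κ̄ we get β k = β (k-1)
      have h2 := (hinv k).2.1
      rw [kbar_scaled, kbar_plain, h3, div_eq_div_iff hden hD] at h2
      have key : β k * (β (k-1) * β (k+1) * (det3 (r (k+1)) (r (k-1)) (r (k+2))
          * det3 (r (k-1)) (r k) (r (k+1))))
          = β (k-1) * (β (k-1) * β (k+1) * (det3 (r (k+1)) (r (k-1)) (r (k+2))
          * det3 (r (k-1)) (r k) (r (k+1)))) := by linear_combination h2
      exact mul_right_cancel₀
        (mul_ne_zero (mul_ne_zero (hβ _) (hβ _)) (mul_ne_zero hB hD)) key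
    have hall : ∀ j : ℤ, β j = β 0 := by
      intro j
      induction j using Int.induction_on with
      | zero => rfl
      | succ i ih =>
          have := hstep ((i : ℤ) + 1)
          rw [show (i : ℤ) + 1 - 1 = (i : ℤ) by ring] at this
          rw [this]; exact ih
      | pred i ih =>
          have := hstep (-(i : ℤ))
          rw [← this]; exact ih
    exact fun n m => (hall n).trans (hall m).symm
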